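/- Fix a > −g/γ. For any x > 0: sup over ν ∈ [a, (a + g/γ) e^{γ²x/(4g)} − g/γ] of P_{(x/2, ν)}(σ(0) < τ_a^V) is at most (2√(2γ)/√(πgx)) exp{−xg/(8γ)}. -/

import Mathlib

open MeasureTheory ProbabilityTheory Filter Set
open scoped ENNReal NNReal

noncomputable section

/-- A standard one-dimensional Brownian motion under the measure `P`. -/
structure IsStdBrownian {Ω : Type*} [MeasurableSpace Ω] (P : Measure Ω)
    (B : ℝ → Ω → ℝ) : Prop where
  measurable : ∀ t : ℝ, Measurable (B t)
  start : ∀ᵐ ω ∂P, B 0 ω = 0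
  contPaths : ∀ᵐ ω ∂P, Continuous fun t => B t ω
  indepIncr : ∀ (n : ℕ) (t : ℕ → ℝ), Monotone t → (∀ i, 0 ≤ t i) →
    iIndepFun
      (fun (i : Fin n) ω => B (t (i.1 + 1)) ω - B (t i.1) ω) P
  gaussIncr : ∀ s t : ℝ, 0 ≤ s → s ≤ t →
    P.map (fun ω => B t ω - B s ω) = gaussianReal 0 (Real.toNNReal (t - s))

/-- The inert particle system: for every initial condition `(h, ν)` a law `law (h, ν)`
under which `B` is a standard Brownian motion and `(H, V, L)` solves the reflected system
`dH = V dt − dB + dL`, `dV = −(γ V + g) dt + dL`, `L` being the local time of `H` at `0`. -/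
structure InertSystem (γ g : ℝ) (Ω : Type*) [MeasurableSpace Ω] where
  law : ℝ × ℝ → Measure Ω
  prob : ∀ p, IsProbabilityMeasure (law p)
  B : ℝ → Ω → ℝ
  H : ℝ → Ω → ℝ
  V : ℝ → Ω → ℝ
  L : ℝ → Ω → ℝ
  measurable_H : ∀ t, Measurable (H t)
  measurable_V : ∀ t, Measurable (V t)
  measurable_L : ∀ t, Measurable (L t)
  brownian : ∀ p, IsStdBrownian (law p) B
  init : ∀ p : ℝ × ℝ, ∀ᵐ ω ∂law p, H 0 ω = p.1 ∧ V 0 ω = p.2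
  contPaths : ∀ p, ∀ᵐ ω ∂law p,
    (Continuous fun t => H t ω) ∧ (Continuous fun t => V t ω) ∧ (Continuous fun t => L t ω)
  gap_nonneg : ∀ p, ∀ᵐ ω ∂law p, ∀ t, 0 ≤ t → 0 ≤ H t ω
  loc_zero : ∀ p, ∀ᵐ ω ∂law p, L 0 ω = 0
  loc_nonneg : ∀ p, ∀ᵐ ω ∂law p, ∀ t, 0 ≤ t → 0 ≤ L t ω
  loc_mono : ∀ p, ∀ᵐ ω ∂law p, MonotoneOn (fun t => L t ω) (Ici (0:ℝ))
  loc_support : ∀ p, ∀ᵐ ω ∂law p, ∀ s t : ℝ, 0 ≤ s → s ≤ t →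
    (∀ u ∈ Icc s t, H u ω ≠ 0) → L s ω = L t ω
  eqH : ∀ p, ∀ᵐ ω ∂law p, ∀ t, 0 ≤ t →
    H t ω = H 0 ω + (∫ u in (0:ℝ)..t, V u ω) - B t ω + L t ω
  eqV : ∀ p, ∀ᵐ ω ∂law p, ∀ t, 0 ≤ t →
    V t ω = V 0 ω - (∫ u in (0:ℝ)..t, (γ * V u ω + g)) + L t ω

/-- The state space `S = [0,∞) × (−g/γ, ∞)`. -/
def stateSpace (γ g : ℝ) : Set (ℝ × ℝ) := Ici (0:ℝ) ×ˢ Ioi (-(g/γ))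

/-- The velocity coordinate `−g/(1+γ)` of the renewal point. -/
def renewalV (γ g : ℝ) : ℝ := -(g / (1 + γ))

/-- `a = −(g + g/(2γ))/(1+γ)`. -/
def aPt (γ g : ℝ) : ℝ := -((g + g / (2 * γ)) / (1 + γ))

/-- `b = −(g − g/(2(1+γ)))/(1+γ)`. -/
def bPt (γ g : ℝ) : ℝ := -((g - g / (2 * (1 + γ))) / (1 + γ))

/-- First time `t ≥ 0` with (extended-real) `t ≥ s` at which `f t = c`; `∞` if no such time. -/
def hitFrom (f : ℝ → ℝ) (c : ℝ) (s : ℝ≥0∞) : ℝ≥0∞ :=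
  ⨅ t ∈ {t : ℝ | 0 ≤ t ∧ s ≤ ENNReal.ofReal t ∧ f t = c}, ENNReal.ofReal t

namespace InertSystem

variable {γ g : ℝ} {Ω : Type*} [MeasurableSpace Ω] (sys : InertSystem γ g Ω)

/-- `τ_c^V`, the first hitting time of level `c` by the velocity. -/
def tauV (c : ℝ) (ω : Ω) : ℝ≥0∞ := hitFrom (fun t => sys.V t ω) c 0

/-- `τ_x^H`, the first hitting time of level `x` by the gap. -/
def tauH (x : ℝ) (ω : Ω) : ℝ≥0∞ := hitFrom (fun t => sys.H t ω) x 0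

/-- `σ(s)`, the first time `≥ s` at which the gap vanishes. -/
def sigmaFrom (s : ℝ≥0∞) (ω : Ω) : ℝ≥0∞ := hitFrom (fun t => sys.H t ω) 0 s

/-- The renewal time `ζ`. -/
def zeta (ω : Ω) : ℝ≥0∞ :=
  ⨅ t ∈ {t : ℝ | 0 ≤ t ∧
      min (sys.tauV (aPt γ g) ω) (sys.tauV (bPt γ g) ω) ≤ ENNReal.ofReal t ∧
      sys.H t ω = 0 ∧ sys.V t ω = renewalV γ g}, ENNReal.ofReal t

/-- The transition probability `P^t((h,ν), ·)`. -/
def transKernel (t : ℝ) (p : ℝ × ℝ) : Measure (ℝ × ℝ) :=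
  (sys.law p).map fun ω => (sys.H t ω, sys.V t ω)

/-- A stationary distribution for the pair `(H, V)`. -/
def IsStationary (π : Measure (ℝ × ℝ)) : Prop :=
  IsProbabilityMeasure π ∧ π (stateSpace γ g)ᶜ = 0 ∧
    ∀ t : ℝ, 0 ≤ t → ∀ A : Set (ℝ × ℝ), MeasurableSet A →
      (∫⁻ p, sys.law p {ω | (sys.H t ω, sys.V t ω) ∈ A} ∂π) = π A

/-- The occupation time `∫_0^ζ 1{(H_t, V_t) ∈ A} dt` of the set `A` before the renewal time. -/
def occupation (A : Set (ℝ × ℝ)) (ω : Ω) : ℝ≥0∞ :=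
  volume {t : ℝ | 0 ≤ t ∧ ENNReal.ofReal t < sys.zeta ω ∧ (sys.H t ω, sys.V t ω) ∈ A}

end InertSystem

/-- Total variation distance (sup over Borel sets of the discrepancy). -/
def tvDist (μ ν : Measure (ℝ × ℝ)) : ℝ :=
  ⨆ A ∈ {A : Set (ℝ × ℝ) | MeasurableSet A}, |(μ A).toReal - (ν A).toReal|

end


section AuxLemmas

lemma hitFrom_le {f : ℝ → ℝ} {c : ℝ} {u : ℝ} (hu : 0 ≤ u) (hfu : f u = c) :
    hitFrom f c 0 ≤ ENNReal.ofReal u := by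
  apply iInf₂_le u
  exact ⟨hu, zero_le, hfu⟩

lemma hitFrom_facts {f : ℝ → ℝ} {c : ℝ} (hf : Continuous f)
    (hlt : hitFrom f c 0 < ⊤) :
    0 ≤ (hitFrom f c 0).toReal ∧ f ((hitFrom f c 0).toReal) = c ∧
      ∀ u, 0 ≤ u → u < (hitFrom f c 0).toReal → f u ≠ c := by
  set τ := hitFrom f c 0 with hτ
  set t₀ := τ.toReal with ht₀
  have hne : τ ≠ ⊤ := hlt.ne
  refine ⟨ENNReal.toReal_nonneg, ?_, ?_⟩
  · -- for each n, find u_n ∈ [t₀, t₀ + 1/(n+1)] with f u_n = c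
    have key : ∀ n : ℕ, ∃ u : ℝ, 0 ≤ u ∧ f u = c ∧ t₀ ≤ u ∧ u ≤ t₀ + 1/(n+1) := by
      intro n
      have hlt' : τ < τ + ENNReal.ofReal (1/(n+1)) := by
        apply ENNReal.lt_add_right hne
        simp [ENNReal.ofReal_eq_zero]
        positivity
      rw [hτ] at hlt'
      rw [hitFrom, iInf_lt_iff] at hlt'
      obtain ⟨u, hu2⟩ := hlt'
      rw [iInf_lt_iff] at hu2
      obtain ⟨⟨hu0, -, hufc⟩, hu2⟩ := hu2
      refine ⟨u, hu0, hufc, ?_, ?_⟩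
      · have : τ ≤ ENNReal.ofReal u := hitFrom_le hu0 hufc
        have := ENNReal.toReal_le_toReal hne ENNReal.ofReal_ne_top |>.mpr this
        rwa [ENNReal.toReal_ofReal hu0] at this
      · have h3 : ENNReal.ofReal u ≤ ENNReal.ofReal t₀ + ENNReal.ofReal (1/(n+1)) := by
          rw [ENNReal.ofReal_toReal hne]
          exact hu2.le
        rw [← ENNReal.ofReal_add ENNReal.toReal_nonneg (by positivity)] at h3
        exact (ENNReal.ofReal_le_ofReal_iff (by positivity)).mp h3
    choose u hu0 hufc hul hur using key
    have htend : Tendsto u atTop (nhds t₀) := by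
      have h1 : Tendsto (fun n : ℕ => t₀ + 1/(n+1 : ℝ)) atTop (nhds (t₀ + 0)) := by
        apply Tendsto.const_add
        exact tendsto_one_div_add_atTop_nhds_zero_nat
      rw [add_zero] at h1
      exact tendsto_of_tendsto_of_tendsto_of_le_of_le tendsto_const_nhds h1 hul hur
    have := ((hf.tendsto t₀).comp htend)
    have heq : ∀ n, f (u n) = c := hufc
    simp only [Function.comp_def, heq] at this
    exact tendsto_nhds_unique this tendsto_const_nhds
  · intro v hv0 hvlt hfv
    have : τ ≤ ENNReal.ofReal v := hitFrom_le hv0 hfv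
    have h2 : ENNReal.ofReal v < τ := by
      rw [← ENNReal.ofReal_toReal hne]
      exact ENNReal.ofReal_lt_ofReal_iff (lt_of_le_of_lt hv0 hvlt) |>.mpr hvlt
    exact absurd (lt_of_le_of_lt this h2) (lt_irrefl _)

lemma gauss_half (v : ℝ≥0) : (1:ℝ≥0∞)/2 ≤ gaussianReal 0 v (Ici 0) := by
  by_cases hv : v = 0
  · subst hv
    rw [gaussianReal_zero_var]
    simp [Measure.dirac_apply' _ measurableSet_Ici]
  · have hmap := gaussianReal_map_const_mul (μ := 0) (v := v) (-1)
    have hvar : (NNReal.mk ((-1:ℝ)^2) (sq_nonneg _) * v : ℝ≥0) = v := by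
      ext; norm_num
    rw [mul_zero, hvar] at hmap
    have hIic : gaussianReal 0 v (Iic 0) = gaussianReal 0 v (Ici 0) := by
      conv_lhs => rw [← hmap]
      rw [Measure.map_apply (by fun_prop) measurableSet_Iic]
      congr 1
      ext y
      simp
    have huniv : (1:ℝ≥0∞) = gaussianReal 0 v univ := by simp
    have hsub : gaussianReal 0 v univ ≤ gaussianReal 0 v (Iic 0) + gaussianReal 0 v (Ici 0) := by
      rw [← Iic_union_Ici (a := (0:ℝ))]
      exact measure_union_le _ _
    rw [hIic] at hsub
    by_contra hcon
    push_neg at hcon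
    have h2 : gaussianReal 0 v (Ici 0) + gaussianReal 0 v (Ici 0) < 1/2 + 1/2 :=
      ENNReal.add_lt_add hcon hcon
    rw [ENNReal.add_halves] at h2
    exact absurd (huniv ▸ hsub) (not_le.mpr h2)

lemma gauss_tail {v : ℝ≥0} (hv : 0 < (v:ℝ)) {c : ℝ} (hc : 0 < c) :
    gaussianReal 0 v (Ici c) ≤
      ENNReal.ofReal (Real.sqrt ((v:ℝ)/(2*Real.pi)) / c * Real.exp (-(c^2/(2*(v:ℝ))))) := by
  have hvne : v ≠ 0 := by exact_mod_cast hv.ne'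
  have h2v : (0:ℝ) < 2 * v := by linarith
  rw [gaussianReal_apply_eq_integral 0 hvne]
  apply ENNReal.ofReal_le_ofReal
  set K : ℝ := (Real.sqrt (2 * Real.pi * v))⁻¹ with hK
  have hKpos : 0 < K := by
    rw [hK]
    apply inv_pos.mpr
    apply Real.sqrt_pos.mpr
    have := Real.pi_pos
    nlinarith
  have hpdf : ∀ y : ℝ, gaussianPDFReal 0 v y = K * Real.exp (-(y^2/(2*v))) := by
    intro y
    rw [gaussianPDFReal]
    congr 1
    rw [sub_zero]
    congr 1
    ring
  -- the dominating function
  have hdom_int : Integrable (fun y : ℝ => y * Real.exp (-(y^2/(2*(v:ℝ))))) := by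
    have := integrable_mul_exp_neg_mul_sq (b := (2*(v:ℝ))⁻¹) (by positivity)
    convert this using 2 with y
    rw [neg_mul_comm]
    ring_nf
  have step1 : ∫ y in Ici c, gaussianPDFReal 0 v y ≤
      ∫ y in Ici c, (K/c) * (y * Real.exp (-(y^2/(2*v)))) := by
    apply setIntegral_mono_on
    · exact (integrable_gaussianPDFReal 0 v).integrableOn
    · exact (hdom_int.const_mul (K/c)).integrableOn
    · exact measurableSet_Ici
    · intro y hy
      rw [hpdf y, div_mul_eq_mul_div, le_div_iff₀ hc]
      have hy' : c ≤ y := hy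
      have he : 0 ≤ Real.exp (-(y^2/(2*(v:ℝ)))) := (Real.exp_pos _).le
      nlinarith [mul_le_mul_of_nonneg_left hy' (mul_nonneg hKpos.le he)]
  -- compute the integral of the dominating function
  have hderiv : ∀ y : ℝ, HasDerivAt (fun z : ℝ => -(v:ℝ) * Real.exp (-(z^2/(2*v))))
      (y * Real.exp (-(y^2/(2*v)))) y := by
    intro y
    have h1 : HasDerivAt (fun z : ℝ => -(z^2/(2*(v:ℝ)))) (-(y/v)) y := by
      have := ((hasDerivAt_pow 2 y).div_const (2*(v:ℝ))).neg
      refine this.congr_deriv ?_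
      field_simp
      ring
    have h2 := h1.exp
    have h3 := h2.const_mul (-(v:ℝ))
    refine h3.congr_deriv ?_
    have hv' : (v:ℝ) ≠ 0 := hv.ne'
    field_simp
  have htend : Tendsto (fun z : ℝ => -(v:ℝ) * Real.exp (-(z^2/(2*v)))) atTop (nhds 0) := by
    have h0 : Tendsto (fun z : ℝ => z^2/(2*(v:ℝ))) atTop atTop :=
      (tendsto_pow_atTop two_ne_zero).atTop_div_const h2v
    have h1 : Tendsto (fun z : ℝ => -(z^2/(2*(v:ℝ)))) atTop atBot :=
      tendsto_neg_atTop_atBot.comp h0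
    have h2 := (Real.tendsto_exp_atBot.comp h1).const_mul (-(v:ℝ))
    simpa using h2
  have hint2 : ∫ y in Ioi c, y * Real.exp (-(y^2/(2*(v:ℝ)))) =
      (v:ℝ) * Real.exp (-(c^2/(2*v))) := by
    rw [integral_Ioi_of_hasDerivAt_of_tendsto' (fun y _ => hderiv y) hdom_int.integrableOn htend]
    ring
  have step2 : ∫ y in Ici c, (K/c) * (y * Real.exp (-(y^2/(2*(v:ℝ))))) =
      (K/c) * ((v:ℝ) * Real.exp (-(c^2/(2*v)))) := by
    rw [integral_const_mul, integral_Ici_eq_integral_Ioi, hint2]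
  have hKv : K * v = Real.sqrt ((v:ℝ)/(2*Real.pi)) := by
    have hpi : (0:ℝ) < 2*Real.pi := by have := Real.pi_pos; linarith
    have hsv : (0:ℝ) < Real.sqrt v := Real.sqrt_pos.mpr hv
    have hsp : (0:ℝ) < Real.sqrt (2*Real.pi) := Real.sqrt_pos.mpr hpi
    have hvv : (v:ℝ) = Real.sqrt v * Real.sqrt v := (Real.mul_self_sqrt hv.le).symm
    calc K * v = (Real.sqrt (2*Real.pi) * Real.sqrt v)⁻¹ * (Real.sqrt v * Real.sqrt v) := by
          rw [hK, Real.sqrt_mul (show (0:ℝ) ≤ 2*Real.pi by positivity), ← hvv]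
      _ = Real.sqrt v / Real.sqrt (2*Real.pi) := by
          rw [mul_inv]
          field_simp
      _ = Real.sqrt ((v:ℝ)/(2*Real.pi)) := (Real.sqrt_div hv.le _).symm
  calc ∫ y in Ici c, gaussianPDFReal 0 v y
      ≤ (K/c) * ((v:ℝ) * Real.exp (-(c^2/(2*v)))) := step1.trans (le_of_eq step2)
    _ = Real.sqrt ((v:ℝ)/(2*Real.pi)) / c * Real.exp (-(c^2/(2*(v:ℝ)))) := by
        rw [← hKv]; ring

open Classical in
lemma discrete_reflection {Ω : Type*} [MeasurableSpace Ω] (P : Measure Ω) [IsProbabilityMeasure P]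
    (X : ℕ → Ω → ℝ) (n : ℕ) (mX : ∀ i, Measurable (X i))
    (hind : ∀ k, k < n → IndepFun (fun ω (i : Fin k) => X (i:ℕ) ω)
        (fun ω => ∑ i ∈ Finset.Ico k n, X i ω) P)
    (hhalf : ∀ k, k < n → (1:ℝ≥0∞)/2 ≤ P {ω | 0 ≤ ∑ i ∈ Finset.Ico k n, X i ω})
    {c : ℝ} (hc : 0 < c) :
    P {ω | ∃ k ≤ n, c ≤ ∑ i ∈ Finset.range k, X i ω} ≤
      2 * P {ω | c ≤ ∑ i ∈ Finset.range n, X i ω} := by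
  set Sk : ℕ → Ω → ℝ := fun k ω => ∑ i ∈ Finset.range k, X i ω with hSk
  have mSk : ∀ k, Measurable (Sk k) := fun k => Finset.measurable_sum _ (fun i _ => mX i)
  set A : ℕ → Set Ω := fun k => {ω | c ≤ Sk k ω ∧ ∀ j < k, Sk j ω < c} with hA
  have mA : ∀ k, MeasurableSet (A k) := by
    intro k
    have : A k = {ω | c ≤ Sk k ω} ∩ ⋂ (j : ℕ) (_ : j < k), {ω | Sk j ω < c} := by
      ext ω; simp [hA, Set.mem_iInter]
    rw [this]
    exact (measurableSet_le measurable_const (mSk k)).inter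
      (MeasurableSet.iInter fun j => MeasurableSet.iInter fun _ =>
        measurableSet_lt (mSk j) measurable_const)
  set Tail : ℕ → Set Ω := fun k => {ω | 0 ≤ ∑ i ∈ Finset.Ico k n, X i ω} with hTail
  have mTail : ∀ k, MeasurableSet (Tail k) :=
    fun k => measurableSet_le measurable_const (Finset.measurable_sum _ (fun i _ => mX i))
  -- partial sums as functions of the prefix tuple
  have hps : ∀ k (j : ℕ), j ≤ k → ∀ ω,
      (∑ i : Fin k, if (i:ℕ) < j then X (i:ℕ) ω else 0) = Sk j ω := by
    intro k j hj ω
    rw [Fin.sum_univ_eq_sum_range (fun i => if i < j then X i ω else 0) k]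
    rw [← Finset.sum_filter]
    congr 1
    ext i
    simp only [Finset.mem_filter, Finset.mem_range]
    omega
  -- product formula
  have hprod : ∀ k, k < n → P (A k ∩ Tail k) = P (A k) * P (Tail k) := by
    intro k hk
    set M : Set (Fin k → ℝ) := {v | c ≤ ∑ i, v i ∧
        ∀ j < k, (∑ i : Fin k, if (i:ℕ) < j then v i else 0) < c} with hM
    have hMmeas : MeasurableSet M := by
      have : M = {v : Fin k → ℝ | c ≤ ∑ i, v i} ∩
          ⋂ (j : ℕ) (_ : j < k), {v : Fin k → ℝ | (∑ i : Fin k, if (i:ℕ) < j then v i else 0) < c} := by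
        ext v; simp [hM, Set.mem_iInter]
      rw [this]
      refine (measurableSet_le measurable_const
        (Finset.measurable_sum _ (fun i _ => measurable_pi_apply i))).inter ?_
      exact MeasurableSet.iInter fun j => MeasurableSet.iInter fun _ =>
        measurableSet_lt (Finset.measurable_sum _ (fun i _ => by
          by_cases h : (i:ℕ) < j
          · simpa [h] using measurable_pi_apply (a := i)
          · simpa [h] using measurable_const)) measurable_const
    have hApre : A k = (fun ω (i : Fin k) => X (i:ℕ) ω) ⁻¹' M := by
      ext ω
      simp only [hA, hM, Set.mem_preimage, Set.mem_setOf_eq]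
      constructor
      · rintro ⟨h1, h2⟩
        constructor
        · rw [Fin.sum_univ_eq_sum_range (fun i => X i ω) k]; exact h1
        · intro j hj
          rw [hps k j hj.le ω]
          exact h2 j hj
      · rintro ⟨h1, h2⟩
        constructor
        · rw [Fin.sum_univ_eq_sum_range (fun i => X i ω) k] at h1; exact h1
        · intro j hj
          have := h2 j hj
          rwa [hps k j hj.le ω] at this
    have hTpre : Tail k = (fun ω => ∑ i ∈ Finset.Ico k n, X i ω) ⁻¹' (Ici 0) := by
      ext ω; simp [hTail]
    rw [hApre, hTpre]
    exact (hind k hk).measure_inter_preimage_eq_mul M (Ici 0) hMmeas measurableSet_Ici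
  -- each A k has measure at most twice that of A k ∩ Tail k
  have hA2 : ∀ k, k ≤ n → P (A k) ≤ 2 * P (A k ∩ Tail k) := by
    intro k hk
    rcases eq_or_lt_of_le hk with rfl | hk
    · have : Tail k = univ := by
        ext ω; simp [hTail]
      rw [this, Set.inter_univ]
      exact le_mul_of_one_le_left zero_le one_le_two
    · have h1 : P (A k) * (1/2) ≤ P (A k ∩ Tail k) := by
        rw [hprod k hk]
        exact mul_le_mul_right (hhalf k hk) _
      have h2 := mul_le_mul_right h1 2
      rwa [mul_comm (2:ℝ≥0∞), mul_assoc, one_div,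
        ENNReal.inv_mul_cancel two_ne_zero ENNReal.ofNat_ne_top, mul_one] at h2
  -- disjointness
  have hdisj : ∀ k l, k < l → Disjoint (A k) (A l) := by
    intro k l hkl
    rw [Set.disjoint_left]
    rintro ω ⟨h1, -⟩ ⟨-, h2⟩
    exact absurd h1 (not_le.mpr (h2 k hkl))
  have hpd : Set.PairwiseDisjoint ↑(Finset.range (n+1)) A := by
    intro k _ l _ hkl
    rcases lt_or_gt_of_ne hkl with h | h
    · exact hdisj k l h
    · exact (hdisj l k h).symm
  -- the union decomposition
  have hE : {ω | ∃ k ≤ n, c ≤ Sk k ω} = ⋃ k ∈ Finset.range (n+1), A k := by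
    ext ω
    simp only [Set.mem_setOf_eq, Set.mem_iUnion, Finset.mem_range]
    constructor
    · rintro ⟨k, hk, hck⟩
      have hex : ∃ m, c ≤ Sk m ω := ⟨k, hck⟩
      refine ⟨Nat.find hex, ?_, Nat.find_spec hex, fun j hj => not_le.mp (Nat.find_min hex hj)⟩
      exact Nat.lt_succ_of_le (le_trans (Nat.find_min' hex hck) hk)
    · rintro ⟨k, hk, h1, -⟩
      exact ⟨k, Nat.lt_succ_iff.mp hk, h1⟩
  calc P {ω | ∃ k ≤ n, c ≤ Sk k ω}
      = P (⋃ k ∈ Finset.range (n+1), A k) := by rw [hE]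
    _ ≤ ∑ k ∈ Finset.range (n+1), P (A k) := measure_biUnion_finset_le _ _
    _ ≤ ∑ k ∈ Finset.range (n+1), 2 * P (A k ∩ Tail k) :=
        Finset.sum_le_sum (fun k hk => hA2 k (Nat.lt_succ_iff.mp (Finset.mem_range.mp hk)))
    _ = 2 * ∑ k ∈ Finset.range (n+1), P (A k ∩ Tail k) := by rw [Finset.mul_sum]
    _ = 2 * P (⋃ k ∈ Finset.range (n+1), (A k ∩ Tail k)) := by
        rw [measure_biUnion_finset (hpd.mono_on ?_ ) (fun k _ => (mA k).inter (mTail k))]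
        · intro k _
          exact Set.inter_subset_left
    _ ≤ 2 * P {ω | c ≤ Sk n ω} := by
        apply mul_le_mul_right
        apply measure_mono
        intro ω hω
        simp only [Set.mem_iUnion, Finset.mem_range] at hω
        obtain ⟨k, hk, ⟨h1, -⟩, h2⟩ := hω
        have hkn : k ≤ n := Nat.lt_succ_iff.mp hk
        have : Sk n ω = Sk k ω + ∑ i ∈ Finset.Ico k n, X i ω := by
          rw [hSk]
          exact (Finset.sum_range_add_sum_Ico _ hkn).symm
        simp only [Set.mem_setOf_eq]
        rw [this]
        have h2' : (0:ℝ) ≤ ∑ i ∈ Finset.Ico k n, X i ω := h2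
        linarith

lemma bm_grid_bound {Ω : Type*} [MeasurableSpace Ω] {P : Measure Ω} [IsProbabilityMeasure P]
    {B : ℝ → Ω → ℝ} (hB : IsStdBrownian P B) {T c : ℝ} (hT : 0 < T) (hc : 0 < c)
    (n : ℕ) (hn : 0 < n) :
    P {ω | ∃ k ≤ n, c ≤ B ((k:ℝ) * T / n) ω - B 0 ω} ≤
      2 * gaussianReal 0 (Real.toNNReal T) (Ici c) := by
  set t' : ℕ → ℝ := fun k => ((min k n : ℕ) : ℝ) * T / n with ht'
  have hnR : (0:ℝ) < (n:ℝ) := by exact_mod_cast hn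
  have ht'mono : Monotone t' := by
    intro k l hkl
    show ((min k n : ℕ) : ℝ) * T / n ≤ ((min l n : ℕ) : ℝ) * T / n
    have h : ((min k n : ℕ) : ℝ) ≤ ((min l n : ℕ) : ℝ) := Nat.cast_le.mpr (by omega)
    gcongr
  have ht'nonneg : ∀ k, 0 ≤ t' k := by
    intro k
    show 0 ≤ ((min k n : ℕ) : ℝ) * T / n
    positivity
  have ht'le : ∀ k, t' k ≤ T := by
    intro k
    show ((min k n : ℕ) : ℝ) * T / n ≤ T
    rw [div_le_iff₀ hnR]
    have : ((min k n : ℕ) : ℝ) ≤ (n:ℝ) := by exact_mod_cast min_le_right k n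
    nlinarith
  have ht'n : t' n = T := by
    show ((min n n : ℕ) : ℝ) * T / n = T
    rw [min_self]
    field_simp
  have ht'0 : t' 0 = 0 := by simp [ht']
  have ht'eq : ∀ k, k ≤ n → t' k = (k:ℝ) * T / n := by
    intro k hk
    show ((min k n : ℕ) : ℝ) * T / n = (k:ℝ) * T / n
    rw [min_eq_left hk]
  set X : ℕ → Ω → ℝ := fun i ω => B (t' (i+1)) ω - B (t' i) ω with hX
  have mX : ∀ i, Measurable (X i) := fun i => (hB.measurable _).sub (hB.measurable _)
  have hsum : ∀ k (ω : Ω), ∑ i ∈ Finset.range k, X i ω = B (t' k) ω - B 0 ω := by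
    intro k ω
    rw [hX]
    rw [Finset.sum_range_sub (f := fun m => B (t' m) ω), ht'0]
  have hIco : ∀ k, k ≤ n → ∀ ω : Ω, ∑ i ∈ Finset.Ico k n, X i ω = B T ω - B (t' k) ω := by
    intro k hk ω
    rw [Finset.sum_Ico_eq_sub _ hk, hsum, hsum, ht'n]
    ring
  have hI := hB.indepIncr n t' ht'mono ht'nonneg
  -- independence of prefix and tail sum
  have hind : ∀ k, k < n → IndepFun (fun ω (i : Fin k) => X (i:ℕ) ω)
      (fun ω => ∑ i ∈ Finset.Ico k n, X i ω) P := by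
    intro k hk
    set S : Finset (Fin n) := Finset.univ.filter (fun i => (i:ℕ) < k) with hS
    set Tt : Finset (Fin n) := Finset.univ.filter (fun i => k ≤ (i:ℕ)) with hTt
    have hdisj : Disjoint S Tt := by
      rw [Finset.disjoint_left]
      intro i hiS hiT
      simp only [hS, hTt, Finset.mem_filter] at hiS hiT
      omega
    have hbase := hI.indepFun_finset S Tt hdisj (fun i => (hB.measurable _).sub (hB.measurable _))
    set φ : ((i : S) → ℝ) → (Fin k → ℝ) := fun v j =>
      v ⟨⟨j.1, lt_trans j.2 hk⟩, Finset.mem_filter.mpr ⟨Finset.mem_univ _, j.2⟩⟩ with hφ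
    have mφ : Measurable φ := measurable_pi_lambda _ fun j => measurable_pi_apply _
    set ψ : ((i : Tt) → ℝ) → ℝ := fun v => ∑ i, v i with hψ
    have mψ : Measurable ψ := Finset.measurable_sum _ fun i _ => measurable_pi_apply i
    have hcomp := hbase.comp mφ mψ
    have h1 : (φ ∘ fun a (i : S) => B (t' ((i:Fin n).1 + 1)) a - B (t' (i:Fin n).1) a)
        = fun ω (j : Fin k) => X (j:ℕ) ω := rfl
    have h2 : (ψ ∘ fun a (i : Tt) => B (t' ((i:Fin n).1 + 1)) a - B (t' (i:Fin n).1) a)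
        = fun ω => ∑ i ∈ Finset.Ico k n, X i ω := by
      funext ω
      show (∑ i : {x // x ∈ Tt}, (B (t' ((i:Fin n).1+1)) ω - B (t' (i:Fin n).1) ω)) = _
      rw [Finset.sum_coe_sort Tt (fun i => B (t' ((i: Fin n).1+1)) ω - B (t' (i:Fin n).1) ω)]
      rw [hTt, Finset.sum_filter]
      rw [Fin.sum_univ_eq_sum_range (fun i => if k ≤ i then B (t' (i+1)) ω - B (t' i) ω else 0) n]
      rw [← Finset.sum_filter]
      have : (Finset.range n).filter (fun i => k ≤ i) = Finset.Ico k n := by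
        ext i; simp [Finset.mem_Ico]; omega
      rw [this]
    rw [h1, h2] at hcomp
    exact hcomp
  have hhalf : ∀ k, k < n → (1:ℝ≥0∞)/2 ≤ P {ω | 0 ≤ ∑ i ∈ Finset.Ico k n, X i ω} := by
    intro k hk
    have hset : {ω | 0 ≤ ∑ i ∈ Finset.Ico k n, X i ω}
        = (fun ω => B T ω - B (t' k) ω) ⁻¹' (Ici 0) := by
      ext ω
      simp only [Set.mem_setOf_eq, Set.mem_preimage, Set.mem_Ici]
      rw [hIco k hk.le ω]
    rw [hset, ← Measure.map_apply (f := fun ω => B T ω - B (t' k) ω) ((hB.measurable _).sub (hB.measurable _)) measurableSet_Ici]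
    rw [hB.gaussIncr (t' k) T (ht'nonneg k) (ht'le k)]
    exact gauss_half _
  have hrefl := discrete_reflection P X n mX hind hhalf hc
  have hev1 : {ω | ∃ k ≤ n, c ≤ B ((k:ℝ) * T / n) ω - B 0 ω}
      = {ω | ∃ k ≤ n, c ≤ ∑ i ∈ Finset.range k, X i ω} := by
    ext ω
    simp only [Set.mem_setOf_eq]
    constructor
    · rintro ⟨k, hk, h⟩
      exact ⟨k, hk, by rw [hsum, ht'eq k hk]; exact h⟩
    · rintro ⟨k, hk, h⟩
      rw [hsum, ht'eq k hk] at h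
      exact ⟨k, hk, h⟩
  have hev2 : P {ω | c ≤ ∑ i ∈ Finset.range n, X i ω}
      ≤ gaussianReal 0 (Real.toNNReal T) (Ici c) := by
    have : {ω | c ≤ ∑ i ∈ Finset.range n, X i ω} = (fun ω => B T ω - B 0 ω) ⁻¹' (Ici c) := by
      ext ω
      simp only [Set.mem_setOf_eq, Set.mem_preimage, Set.mem_Ici]
      rw [hsum, ht'n]
    rw [this, ← Measure.map_apply (f := fun ω => B T ω - B 0 ω) ((hB.measurable _).sub (hB.measurable _)) measurableSet_Ici]
    rw [hB.gaussIncr 0 T le_rfl hT.le]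
    simp
  rw [hev1]
  exact hrefl.trans (mul_le_mul_right hev2 _)

lemma bm_sup_bound {Ω : Type*} [MeasurableSpace Ω] {P : Measure Ω} [IsProbabilityMeasure P]
    {B : ℝ → Ω → ℝ} (hB : IsStdBrownian P B) {T lam c : ℝ} (hT : 0 < T) (hc : 0 < c)
    (hclam : c < lam) :
    P {ω | Continuous (fun t => B t ω) ∧ B 0 ω = 0 ∧ ∃ t ∈ Icc 0 T, lam ≤ B t ω} ≤
      2 * gaussianReal 0 (Real.toNNReal T) (Ici c) := by
  set D : ℕ → Set Ω := fun j =>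
    {ω | ∃ k : ℕ, k ≤ 2^j ∧ c ≤ B ((k:ℝ) * T / ((2^j : ℕ):ℝ)) ω - B 0 ω} with hD
  have hDmeas : ∀ j, MeasurableSet (D j) := by
    intro j
    have : D j = ⋃ (k : ℕ) (_ : k ≤ 2^j),
        {ω | c ≤ B ((k:ℝ) * T / ((2^j:ℕ):ℝ)) ω - B 0 ω} := by
      ext ω; simp [hD]
    rw [this]
    exact MeasurableSet.iUnion fun k => MeasurableSet.iUnion fun _ =>
      measurableSet_le measurable_const ((hB.measurable _).sub (hB.measurable _))
  have hDmono : Monotone D := by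
    intro j l hjl
    -- suffices to treat l = j+1 and induct; do direct: k ≤ 2^j gives k*2^(l-j) ≤ 2^l
    intro ω hω
    obtain ⟨k, hk, h⟩ := hω
    refine ⟨k * 2^(l-j), ?_, ?_⟩
    · calc k * 2^(l-j) ≤ 2^j * 2^(l-j) := Nat.mul_le_mul_right _ hk
        _ = 2^l := by rw [← pow_add]; congr 1; omega
    · have heq : ((k * 2^(l-j) : ℕ):ℝ) * T / ((2^l : ℕ):ℝ) = (k:ℝ) * T / ((2^j : ℕ):ℝ) := by
        have h2l : ((2^l : ℕ):ℝ) = ((2^j : ℕ):ℝ) * ((2^(l-j) : ℕ):ℝ) := by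
          push_cast
          rw [← pow_add]
          congr 1
          omega
        push_cast [h2l]
        have hj : (0:ℝ) < ((2:ℝ)^j) := by positivity
        have hlj : (0:ℝ) < ((2:ℝ)^(l-j)) := by positivity
        field_simp
      rw [heq]
      exact h
  have hsub : {ω | Continuous (fun t => B t ω) ∧ B 0 ω = 0 ∧ ∃ t ∈ Icc 0 T, lam ≤ B t ω}
      ⊆ ⋃ j, D j := by
    rintro ω ⟨hcont, hB0, t, ⟨ht0, htT⟩, hlam⟩
    -- find δ with B s ω > c for |s - t| < δ
    have hopen : IsOpen {s : ℝ | c < B s ω} := isOpen_lt continuous_const hcont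
    have htmem : t ∈ {s : ℝ | c < B s ω} := lt_of_lt_of_le hclam hlam
    obtain ⟨δ, hδ, hball⟩ := Metric.isOpen_iff.mp hopen t htmem
    -- choose j with T / 2^j < δ
    obtain ⟨j, hj⟩ := pow_unbounded_of_one_lt (T / δ) (by norm_num : (1:ℝ) < 2)
    have h2j : (0:ℝ) < (2:ℝ)^j := by positivity
    have hTd : T / 2^j < δ := by
      rw [div_lt_iff₀ h2j]
      rw [div_lt_iff₀ hδ] at hj
      nlinarith
    set k := ⌊t * 2^j / T⌋₊ with hk
    have hratio_nonneg : 0 ≤ t * 2^j / T := by positivity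
    have hkle : k ≤ 2^j := by
      have h1 : t * 2^j / T ≤ 2^j := by
        rw [div_le_iff₀ hT]
        nlinarith
      calc k ≤ ⌊((2^j : ℕ):ℝ)⌋₊ := Nat.floor_le_floor (by push_cast; exact h1)
        _ = 2^j := Nat.floor_natCast _
    have h1 : (k:ℝ) ≤ t * 2^j / T := Nat.floor_le hratio_nonneg
    have h2 : (k:ℝ) * T ≤ t * 2^j := (le_div_iff₀ hT).mp h1
    have h3 : t * 2^j / T < (k:ℝ) + 1 := Nat.lt_floor_add_one _
    have h4 : t * 2^j < ((k:ℝ)+1) * T := by rw [div_lt_iff₀ hT] at h3; linarith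
    have hmem : (k:ℝ)*T/((2^j:ℕ):ℝ) ∈ Metric.ball t δ := by
      rw [Metric.mem_ball, Real.dist_eq, abs_sub_lt_iff]
      push_cast
      constructor
      · have hs_le : (k:ℝ) * T / 2^j ≤ t := by
          rw [div_le_iff₀ h2j]
          nlinarith
        linarith
      · rw [sub_lt_iff_lt_add]
        have hlt : t < ((k:ℝ)+1)*T/2^j := by
          rw [lt_div_iff₀ h2j]
          nlinarith
        have : ((k:ℝ)+1)*T/2^j = (k:ℝ)*T/2^j + T/2^j := by ring
        rw [this] at hlt
        linarith
    have hcB := hball hmem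
    refine Set.mem_iUnion.mpr ⟨j, k, hkle, ?_⟩
    rw [hB0, sub_zero]
    exact le_of_lt hcB
  calc P {ω | Continuous (fun t => B t ω) ∧ B 0 ω = 0 ∧ ∃ t ∈ Icc 0 T, lam ≤ B t ω}
      ≤ P (⋃ j, D j) := measure_mono hsub
    _ = ⨆ j, P (D j) := Directed.measure_iUnion (hDmono.directed_le)
    _ ≤ 2 * gaussianReal 0 (Real.toNNReal T) (Ici c) :=
        iSup_le fun j => bm_grid_bound hB hT hc (2^j) (by positivity)

lemma pathwise_step {γ g a x ν T : ℝ} (hγ : 0 < γ) (hg : 0 < g) (ha : -(g/γ) < a)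
    (hx : 0 < x) (hν : a ≤ ν) (hν' : ν ≤ (a + g/γ) * Real.exp (γ^2*x/(4*g)) - g/γ)
    (hT : T = γ*x/(4*g))
    (H V L Bp : ℝ → ℝ)
    (hH0 : H 0 = x/2) (hV0 : V 0 = ν)
    (hHc : Continuous H) (hVc : Continuous V) (hLc : Continuous L)
    (hL0 : L 0 = 0)
    (hLsupp : ∀ s t : ℝ, 0 ≤ s → s ≤ t → (∀ u ∈ Icc s t, H u ≠ 0) → L s = L t)
    (heqH : ∀ t, 0 ≤ t → H t = H 0 + (∫ u in (0:ℝ)..t, V u) - Bp t + L t)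
    (heqV : ∀ t, 0 ≤ t → V t = V 0 - (∫ u in (0:ℝ)..t, (γ * V u + g)) + L t)
    (hlt : hitFrom H 0 0 < hitFrom V a 0) :
    ∃ t ∈ Icc (0:ℝ) T, x/4 ≤ Bp t := by
  have hTpos : 0 < T := by rw [hT]; positivity
  have hτtop : hitFrom H 0 0 < ⊤ := lt_of_lt_of_le hlt le_top
  obtain ⟨ht0, hHt0, hHne⟩ := hitFrom_facts hHc hτtop
  set t₀ := (hitFrom H 0 0).toReal with ht₀def
  have hofr : ENNReal.ofReal t₀ = hitFrom H 0 0 := ENNReal.ofReal_toReal hτtop.ne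
  -- velocity stays ≥ a on [0, t₀]
  have hVa : ∀ u, 0 ≤ u → u ≤ t₀ → a ≤ V u := by
    intro u hu0 hut
    by_contra hcon
    push_neg at hcon
    have hIVT : a ∈ Icc (V u) (V 0) := ⟨hcon.le, by rw [hV0]; exact hν⟩
    obtain ⟨s, hs, hVs⟩ := intermediate_value_Icc' hu0 hVc.continuousOn hIVT
    have h1 : hitFrom V a 0 ≤ ENNReal.ofReal s := hitFrom_le hs.1 hVs
    have h2 : ENNReal.ofReal s ≤ ENNReal.ofReal t₀ :=
      ENNReal.ofReal_le_ofReal (le_trans hs.2 hut)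
    rw [hofr] at h2
    exact absurd (lt_of_le_of_lt (h1.trans h2) hlt) (lt_irrefl _)
  -- local time vanishes on [0, t₀]
  have hLzero' : ∀ u, 0 ≤ u → u < t₀ → L u = 0 := by
    intro u hu0 hut
    have : L 0 = L u := by
      apply hLsupp 0 u le_rfl hu0
      intro w hw
      exact hHne w hw.1 (lt_of_le_of_lt hw.2 hut)
    rw [← this, hL0]
  have hLzero : ∀ u, 0 ≤ u → u ≤ t₀ → L u = 0 := by
    intro u hu0 hut
    rcases lt_or_eq_of_le hut with h | heq
    · exact hLzero' u hu0 h
    · rcases eq_or_lt_of_le hu0 with h0 | hpos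
      · rw [← h0]; exact hL0
      · -- approximate t₀ = u from the left
        set w : ℕ → ℝ := fun n => u - u/(n+2) with hw
        have hw0 : ∀ n, 0 ≤ w n := by
          intro n
          rw [hw]
          simp only
          have : u/((n:ℝ)+2) ≤ u := by
            apply div_le_self hpos.le
            have : (0:ℝ) ≤ (n:ℝ) := Nat.cast_nonneg n
            linarith
          linarith
        have hwlt : ∀ n, w n < u := by
          intro n
          rw [hw]
          simp only
          have : 0 < u/((n:ℝ)+2) := by positivity
          linarith
        have hwt : Tendsto w atTop (nhds u) := by
          rw [hw]
          have h1 : Tendsto (fun n : ℕ => u/((n:ℝ)+2)) atTop (nhds 0) := by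
            apply Filter.Tendsto.div_atTop (tendsto_const_nhds)
            exact tendsto_atTop_add_const_right atTop 2 tendsto_natCast_atTop_atTop
          have := tendsto_const_nhds (x := u) (f := atTop (α := ℕ)) |>.sub h1
          simpa using this
        have hLn : ∀ n, L (w n) = 0 := fun n =>
          hLzero' _ (hw0 n) (by rw [← heq]; exact hwlt n)
        have hLt := (hLc.tendsto u).comp hwt
        simp only [Function.comp_def, hLn] at hLt
        exact tendsto_nhds_unique hLt tendsto_const_nhds
  -- explicit solution for V on [0, t₀]
  set φ : ℝ → ℝ := fun u => (ν + g/γ) * Real.exp (-(γ*u)) - g/γ with hφ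
  set F : ℝ → ℝ := fun u => ν - ∫ s in (0:ℝ)..u, (γ * V s + g) with hF
  have hcontInt : Continuous fun s => γ * V s + g :=
    (continuous_const.mul hVc).add continuous_const
  have hFd : ∀ u : ℝ, HasDerivAt F (-(γ * V u + g)) u := by
    intro u
    have h1 : HasDerivAt (fun w => ∫ s in (0:ℝ)..w, (γ * V s + g)) (γ * V u + g) u :=
      intervalIntegral.integral_hasDerivAt_right (hcontInt.intervalIntegrable _ _)
        (hcontInt.stronglyMeasurableAtFilter _ _) hcontInt.continuousAt
    simpa [hF] using (h1.const_sub ν)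
  have hφd : ∀ u : ℝ, HasDerivAt φ ((ν + g/γ) * (Real.exp (-(γ*u)) * (-γ))) u := by
    intro u
    have h0 : HasDerivAt (fun w : ℝ => -(γ*w)) (-γ) u := by
      exact (((hasDerivAt_id u).const_mul γ).neg).congr_deriv (by ring)
    exact ((h0.exp).const_mul (ν + g/γ)).sub_const (g/γ)
  have hVF : ∀ u, 0 ≤ u → u ≤ t₀ → V u = F u := by
    intro u h1 h2
    have := heqV u h1
    rw [hV0, hLzero u h1 h2, add_zero] at this
    exact this
  have hFc : Continuous F := by
    have : Differentiable ℝ F := fun u => (hFd u).differentiableAt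
    exact this.continuous
  have hφc : Continuous φ := by
    have : Differentiable ℝ φ := fun u => (hφd u).differentiableAt
    exact this.continuous
  have hres := norm_le_gronwallBound_of_norm_deriv_right_le
    (f := fun u => F u - φ u) (f' := fun u => -γ * (V u - φ u)) (δ := 0) (K := γ) (ε := 0)
    (a := 0) (b := t₀)
    ((hFc.sub hφc).continuousOn)
    (fun u _ => by
      have hd := (hFd u).sub (hφd u)
      have heq : -(γ * V u + g) - ((ν + g/γ) * (Real.exp (-(γ*u)) * (-γ)))
          = -γ * (V u - φ u) := by
        rw [hφ]
        have hγne : γ ≠ 0 := ne_of_gt hγ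
        field_simp
        ring
      rw [heq] at hd
      exact hd.hasDerivWithinAt)
    (by
      show ‖F 0 - φ 0‖ ≤ 0
      have : F 0 - φ 0 = 0 := by
        simp [hF, hφ, intervalIntegral.integral_same, Real.exp_zero]
      rw [this]; simp)
    (fun u hu => by
      show ‖-γ * (V u - φ u)‖ ≤ γ * ‖F u - φ u‖ + 0
      rw [← hVF u hu.1 hu.2.le]
      rw [norm_mul, norm_neg, Real.norm_eq_abs (γ), abs_of_pos hγ, add_zero])
  have hVφ : ∀ u, 0 ≤ u → u ≤ t₀ → V u = φ u := by
    intro u h1 h2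
    have h := hres u ⟨h1, h2⟩
    rw [gronwallBound_ε0, zero_mul] at h
    have h' : F u - φ u = 0 := norm_le_zero_iff.mp h
    rw [hVF u h1 h2, ← sub_eq_zero]
    exact h' 
  -- t₀ is at most T
  have hle : t₀ ≤ T := by
    by_contra hcon
    push_neg at hcon
    have hVT : V T = φ T := hVφ T hTpos.le hcon.le
    have hφT : φ T ≤ a := by
      have hE : Real.exp (γ^2*x/(4*g)) = Real.exp (γ*T) := by
        rw [hT]; congr 1; field_simp
      rw [hE] at hν'
      have h1 : ν + g/γ ≤ (a + g/γ) * Real.exp (γ*T) := by linarith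
      have h2 : (ν + g/γ) * Real.exp (-(γ*T)) ≤ (a + g/γ) * Real.exp (γ*T) * Real.exp (-(γ*T)) :=
        mul_le_mul_of_nonneg_right h1 (Real.exp_pos _).le
      rw [mul_assoc, ← Real.exp_add, add_neg_cancel, Real.exp_zero, mul_one] at h2
      rw [hφ]
      simp only
      linarith
    have hVTa : V T = a := le_antisymm (hVT ▸ hφT) (hVa T hTpos.le hcon.le)
    have h1 : hitFrom V a 0 ≤ ENNReal.ofReal T := hitFrom_le hTpos.le hVTa
    have h2 : ENNReal.ofReal T < ENNReal.ofReal t₀ :=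
      (ENNReal.ofReal_lt_ofReal_iff (lt_trans hTpos hcon)).mpr hcon
    rw [hofr] at h2
    exact absurd ((h1.trans_lt h2).trans hlt) (lt_irrefl _)
  -- conclude
  have hInt : a * t₀ ≤ ∫ u in (0:ℝ)..t₀, V u := by
    have h := intervalIntegral.integral_mono_on (μ := volume) (f := fun _ => a) (g := V) ht0
      (intervalIntegrable_const) (hVc.intervalIntegrable _ _) (fun u hu => hVa u hu.1 hu.2)
    rwa [intervalIntegral.integral_const, smul_eq_mul, sub_zero, mul_comm] at h
  have hkey := heqH t₀ ht0
  rw [hHt0, hH0, hLzero t₀ ht0 le_rfl, add_zero] at hkey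
  refine ⟨t₀, ⟨ht0, hle⟩, ?_⟩
  have h1 : -(g/γ) * t₀ ≤ a * t₀ := mul_le_mul_of_nonneg_right ha.le ht0
  have h2 : -(g/γ) * T ≤ -(g/γ) * t₀ := by
    have hgγ : 0 ≤ g/γ := by positivity
    nlinarith
  have h3 : -(g/γ) * T = -(x/4) := by rw [hT]; field_simp
  linarith

end AuxLemmas
/-- Bound on the probability that the gap vanishes before the velocity drops
to the level `a`. -/
theorem gap_hits_zero_before_velocity_drops
    (γ g : ℝ) (hγ : 0 < γ) (hg : 0 < g)
    {Ω : Type*} [MeasurableSpace Ω] (sys : InertSystem γ g Ω) :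
    ∀ a : ℝ, -(g / γ) < a → ∀ x : ℝ, 0 < x →
      ∀ ν : ℝ, a ≤ ν → ν ≤ (a + g / γ) * Real.exp (γ ^ 2 * x / (4 * g)) - g / γ →
        sys.law (x / 2, ν) {ω | sys.tauH 0 ω < sys.tauV a ω} ≤
          ENNReal.ofReal ((2 * Real.sqrt (2 * γ) / Real.sqrt (Real.pi * g * x)) *
            Real.exp (-(x * g / (8 * γ)))) := by
  intro a ha x hx ν hν hν'
  set P := sys.law (x/2, ν) with hP
  haveI : IsProbabilityMeasure P := sys.prob _
  have hTpos : 0 < γ*x/(4*g) := by positivity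
  have hlampos : 0 < x/4 := by positivity
  set E : Set Ω := {ω | Continuous (fun t => sys.B t ω) ∧ sys.B 0 ω = 0 ∧
      ∃ t ∈ Icc (0:ℝ) (γ*x/(4*g)), x/4 ≤ sys.B t ω} with hE
  have hBM := sys.brownian (x/2, ν)
  have h_ae : ∀ᵐ ω ∂P, ω ∈ {ω | sys.tauH 0 ω < sys.tauV a ω} → ω ∈ E := by
    filter_upwards [sys.init (x/2,ν), sys.contPaths (x/2,ν), sys.loc_zero (x/2,ν),
      sys.loc_support (x/2,ν), sys.eqH (x/2,ν), sys.eqV (x/2,ν), hBM.start, hBM.contPaths]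
      with ω hinit hcont hlz hlsupp heqH heqV hB0 hBc
    intro hmem
    obtain ⟨t, htmem, hxB⟩ := pathwise_step hγ hg ha hx hν hν' rfl
      (fun t => sys.H t ω) (fun t => sys.V t ω) (fun t => sys.L t ω) (fun t => sys.B t ω)
      hinit.1 hinit.2 hcont.1 hcont.2.1 hcont.2.2 hlz hlsupp
      (fun t ht => heqH t ht) (fun t ht => heqV t ht) hmem
    exact ⟨hBc, hB0, t, htmem, hxB⟩
  have hmono : P {ω | sys.tauH 0 ω < sys.tauV a ω} ≤ P E := by
    apply measure_mono_ae
    exact h_ae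
  set cseq : ℕ → ℝ := fun m => x/4 - (x/4)/(m+2) with hcseq
  have hcpos : ∀ m : ℕ, 0 < cseq m := by
    intro m
    show 0 < x/4 - (x/4)/((m:ℝ)+2)
    have h1 : (x/4)/((m:ℝ)+2) < x/4 := by
      apply div_lt_self hlampos
      have : (0:ℝ) ≤ (m:ℝ) := Nat.cast_nonneg m
      linarith
    linarith
  have hclam : ∀ m : ℕ, cseq m < x/4 := by
    intro m
    show x/4 - (x/4)/((m:ℝ)+2) < x/4
    have : 0 < (x/4)/((m:ℝ)+2) := by positivity
    linarith
  have hTnn : ((Real.toNNReal (γ*x/(4*g)) : ℝ≥0) : ℝ) = γ*x/(4*g) :=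
    Real.coe_toNNReal _ hTpos.le
  set Fb : ℝ → ℝ := fun c =>
    2 * (Real.sqrt ((γ*x/(4*g))/(2*Real.pi)) / c * Real.exp (-(c^2/(2*(γ*x/(4*g)))))) with hFb
  have hstep : ∀ m : ℕ, P E ≤ ENNReal.ofReal (Fb (cseq m)) := by
    intro m
    have h1 := bm_sup_bound hBM hTpos (hcpos m) (hclam m)
    have h2 : gaussianReal 0 (Real.toNNReal (γ*x/(4*g))) (Ici (cseq m)) ≤
        ENNReal.ofReal (Real.sqrt ((γ*x/(4*g))/(2*Real.pi)) / (cseq m) *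
          Real.exp (-((cseq m)^2/(2*(γ*x/(4*g)))))) := by
      have h3 := gauss_tail (v := Real.toNNReal (γ*x/(4*g)))
        (by rw [hTnn]; exact hTpos) (hcpos m)
      rwa [hTnn] at h3
    calc P E ≤ 2 * gaussianReal 0 (Real.toNNReal (γ*x/(4*g))) (Ici (cseq m)) := h1
      _ ≤ 2 * ENNReal.ofReal (Real.sqrt ((γ*x/(4*g))/(2*Real.pi)) / (cseq m) *
            Real.exp (-((cseq m)^2/(2*(γ*x/(4*g)))))) := mul_le_mul_right h2 _
      _ = ENNReal.ofReal (Fb (cseq m)) := by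
          rw [hFb, show ((2:ℝ≥0∞)) = ENNReal.ofReal 2 by simp,
            ← ENNReal.ofReal_mul (by norm_num : (0:ℝ) ≤ 2)]
  have hctend : Tendsto cseq atTop (nhds (x/4)) := by
    have h1 : Tendsto (fun m : ℕ => (x/4)/((m:ℝ)+2)) atTop (nhds 0) :=
      Filter.Tendsto.div_atTop tendsto_const_nhds
        (tendsto_atTop_add_const_right atTop 2 tendsto_natCast_atTop_atTop)
    have h2 := (tendsto_const_nhds (x := x/4) (f := atTop (α := ℕ))).sub h1
    simpa using h2
  have hFcont : ContinuousAt Fb (x/4) := by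
    apply ContinuousAt.mul continuousAt_const
    apply ContinuousAt.mul
    · exact continuousAt_const.div continuousAt_id hlampos.ne'
    · apply Real.continuous_exp.continuousAt.comp
      exact (((continuousAt_id.pow 2).div_const _).neg)
  have htendF : Tendsto (fun m => ENNReal.ofReal (Fb (cseq m))) atTop
      (nhds (ENNReal.ofReal (Fb (x/4)))) :=
    (ENNReal.continuous_ofReal.continuousAt.comp hFcont).tendsto.comp hctend
  have hPE : P E ≤ ENNReal.ofReal (Fb (x/4)) :=
    ge_of_tendsto htendF (Filter.Eventually.of_forall hstep)
  refine hmono.trans (hPE.trans ?_)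
  apply ENNReal.ofReal_le_ofReal
  have hπ := Real.pi_pos
  have hexp : (x/4)^2/(2*(γ*x/(4*g))) = x*g/(8*γ) := by field_simp; ring
  have hpref : 2 * (Real.sqrt ((γ*x/(4*g))/(2*Real.pi)) / (x/4))
      = 2*Real.sqrt (2*γ)/Real.sqrt (Real.pi*g*x) := by
    have h1 : 2 * (Real.sqrt ((γ*x/(4*g))/(2*Real.pi)) / (x/4))
        = Real.sqrt (8*γ/(Real.pi*g*x)) := by
      rw [show (2:ℝ) * (Real.sqrt ((γ*x/(4*g))/(2*Real.pi)) / (x/4))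
        = Real.sqrt ((γ*x/(4*g))/(2*Real.pi)) * (8/x) by field_simp; ring]
      rw [show (8:ℝ)/x = Real.sqrt ((8/x)^2) from (Real.sqrt_sq (by positivity)).symm]
      rw [← Real.sqrt_mul (by positivity)]
      congr 1
      field_simp
      ring
    have h2 : 2*Real.sqrt (2*γ)/Real.sqrt (Real.pi*g*x) = Real.sqrt (8*γ/(Real.pi*g*x)) := by
      rw [Real.sqrt_div (by positivity : (0:ℝ) ≤ 8*γ) (Real.pi*g*x)]
      rw [show (8:ℝ)*γ = 4*(2*γ) by ring, Real.sqrt_mul (by norm_num : (0:ℝ) ≤ 4)]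
      rw [show Real.sqrt 4 = 2 by
        rw [show (4:ℝ) = 2^2 by norm_num, Real.sqrt_sq (by norm_num : (0:ℝ) ≤ 2)]]
    rw [h1, h2]
  calc Fb (x/4)
      = (2 * (Real.sqrt ((γ*x/(4*g))/(2*Real.pi)) / (x/4))) *
        Real.exp (-((x/4)^2/(2*(γ*x/(4*g))))) := by rw [hFb]; ring
    _ = (2*Real.sqrt (2*γ)/Real.sqrt (Real.pi*g*x)) * Real.exp (-(x*g/(8*γ))) := by
        rw [hpref, hexp]
    _ ≤ 2 * Real.sqrt (2 * γ) / Real.sqrt (Real.pi * g * x) * Real.exp (-(x * g / (8 * γ))) :=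
        le_rfl
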